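/- arXiv:1606.04425 — 3 statements merged into one kernel-verified Lean document; each statement's English description precedes it below -/
import Mathlib

section
/- Let B > 0, F > 1 be real numbers such that log₁₀ F is irrational. Then the exponential growth series B·Fⁿ obeys Benford's Law: for every digit d ∈ {1, ..., 9}, the proportion, among n ∈ {0, 1, ..., N−1}, of indices n for which B·Fⁿ has first digit d, tends to log₁₀(1 + 1/d) as N → ∞. -/
open Filter
open scoped Classical

open MeasureTheory Metric Finset

instance fact_zero_lt_one_real : Fact ((0:ℝ) < 1) := ⟨zero_lt_one⟩

namespace BenfordAux

noncomputable instance : MeasureSpace (AddCircle (1:ℝ)) := inferInstance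

instance : IsProbabilityMeasure (volume : Measure (AddCircle (1:ℝ))) :=
  ⟨by rw [AddCircle.measure_univ]; norm_num⟩

lemma cm_integrable (f : C(AddCircle (1:ℝ), ℂ)) : Integrable f volume := by
  apply f.continuous.integrable_of_hasCompactSupport
  exact HasCompactSupport.of_compactSpace _

lemma avg_geom_tendsto_zero {z : ℂ} (hz : ‖z‖ = 1) (h1 : z ≠ 1) :
    Tendsto (fun N : ℕ => (∑ n ∈ Finset.range N, z ^ n) / (N : ℂ)) atTop (nhds 0) := by
  have hz1 : (0:ℝ) < ‖z - 1‖ := by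
    rw [norm_pos_iff]; exact sub_ne_zero.2 h1
  apply squeeze_zero_norm (a := fun N : ℕ => (2 / ‖z - 1‖) / (N : ℝ))
  · intro N
    rw [norm_div, Complex.norm_natCast, geom_sum_eq h1, norm_div]
    have h2 : ‖z ^ N - 1‖ ≤ 2 := by
      calc ‖z ^ N - 1‖ ≤ ‖z ^ N‖ + ‖(1:ℂ)‖ := norm_sub_le _ _
        _ = 2 := by rw [norm_pow, hz, one_pow, norm_one]; norm_num
    gcongr
  · simpa using tendsto_const_div_atTop_nhds_zero_nat (2 / ‖z - 1‖)

variable (α x : ℝ)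

/-- Birkhoff-type average property -/
def P (f : C(AddCircle (1:ℝ), ℂ)) : Prop :=
  Tendsto (fun N : ℕ => (∑ n ∈ Finset.range N, f ((x + n * α : ℝ) : AddCircle (1:ℝ))) / (N : ℂ))
    atTop (nhds (∫ y : AddCircle (1:ℝ), f y))

lemma P_fourier (hirr : Irrational α) (k : ℤ) : P α x (fourier k) := by
  rcases eq_or_ne k 0 with rfl | hk
  · unfold P
    have hint : (∫ y : AddCircle (1:ℝ), fourier 0 y) = 1 := by
      simp [fourier_zero]
    rw [hint]
    apply Tendsto.congr' (f₁ := fun _ : ℕ => (1:ℂ)) _ tendsto_const_nhds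
    filter_upwards [eventually_ge_atTop 1] with N hN
    have : ((N:ℂ)) ≠ 0 := Nat.cast_ne_zero.mpr (by omega)
    simp only [fourier_zero, Finset.sum_const, Finset.card_range, nsmul_eq_mul, mul_one]
    rw [div_self this]
  · set z : ℂ := Complex.exp (2 * Real.pi * Complex.I * k * α) with hzdef
    have hzre : (2 * ↑Real.pi * Complex.I * (k:ℂ) * (α:ℂ)) = ((2 * Real.pi * (k * α) : ℝ) : ℂ) * Complex.I := by
      push_cast; ring
    have hznorm : ‖z‖ = 1 := by
      rw [hzdef, hzre]
      exact Complex.norm_exp_ofReal_mul_I _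
    have hz1 : z ≠ 1 := by
      intro h
      rw [hzdef, hzre, Complex.exp_eq_one_iff] at h
      obtain ⟨m, hm⟩ := h
      have him : (2 * Real.pi * (k * α) : ℝ) = 2 * Real.pi * m := by
        have := congrArg Complex.im hm
        simpa [Complex.ofReal_mul, mul_comm] using this
      have hka : (k:ℝ) * α = m := by
        have hpi : (2 * Real.pi : ℝ) ≠ 0 := by positivity
        have : 2 * Real.pi * ((k:ℝ) * α) = 2 * Real.pi * (m:ℝ) := by linarith [him]
        exact mul_left_cancel₀ hpi this
      exact (hirr.intCast_mul hk).ne_int m (by exact_mod_cast hka)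
    have key : ∀ n : ℕ, fourier k ((x + n * α : ℝ) : AddCircle (1:ℝ))
        = fourier k ((x : ℝ) : AddCircle (1:ℝ)) * z ^ n := by
      intro n
      rw [fourier_coe_apply, fourier_coe_apply, hzdef, ← Complex.exp_nat_mul, ← Complex.exp_add]
      congr 1
      push_cast
      ring
    have hint : (∫ y : AddCircle (1:ℝ), fourier k y) = 0 := by
      have h1 : (∫ t in (0:ℝ)..0 + 1, fourier k (t : AddCircle (1:ℝ))) = ∫ y : AddCircle (1:ℝ), fourier k y :=
        AddCircle.intervalIntegral_preimage 1 0 _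
      rw [← h1]
      have h2 : ∀ t : ℝ, fourier k ((t:ℝ) : AddCircle (1:ℝ)) = Complex.exp ((2 * Real.pi * Complex.I * k) * t) := by
        intro t; rw [fourier_coe_apply]; push_cast; ring_nf
      have hc : (2 * Real.pi * Complex.I * (k:ℂ)) ≠ 0 := by
        apply mul_ne_zero
        apply mul_ne_zero
        · norm_num [Complex.ofReal_ne_zero, Real.pi_ne_zero]
        · exact Complex.I_ne_zero
        · exact_mod_cast hk
      rw [intervalIntegral.integral_congr (fun t _ => h2 t), zero_add,
        integral_exp_mul_complex hc]
      have : Complex.exp (2 * Real.pi * Complex.I * (k:ℂ) * (1:ℝ)) = 1 := by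
        rw [show (2 * Real.pi * Complex.I * (k:ℂ) * ((1:ℝ):ℂ)) = (k:ℂ) * (2 * Real.pi * Complex.I) by push_cast; ring]
        exact Complex.exp_int_mul_two_pi_mul_I k
      rw [this]
      simp
    unfold P
    rw [hint]
    have heq : (fun N : ℕ => (∑ n ∈ Finset.range N, fourier k ((x + n * α : ℝ) : AddCircle (1:ℝ))) / (N : ℂ))
        = fun N : ℕ => fourier k ((x : ℝ) : AddCircle (1:ℝ)) * ((∑ n ∈ Finset.range N, z ^ n) / (N : ℂ)) := by
      funext N
      simp only [key, ← Finset.mul_sum, mul_div_assoc]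
    rw [heq]
    simpa using (avg_geom_tendsto_zero hznorm hz1).const_mul (fourier k ((x : ℝ) : AddCircle (1:ℝ)))

lemma P_isClosed : IsClosed {f : C(AddCircle (1:ℝ), ℂ) | P α x f} := by
  apply isClosed_of_closure_subset
  intro f hf
  simp only [Set.mem_setOf_eq]
  unfold P
  rw [Metric.tendsto_atTop]
  intro ε hε
  obtain ⟨g, hgP, hfg⟩ := Metric.mem_closure_iff.1 hf (ε / 4) (by positivity)
  have hbirk : ∀ N : ℕ,
      dist ((∑ n ∈ Finset.range N, f ((x + n * α : ℝ) : AddCircle (1:ℝ))) / (N : ℂ))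
           ((∑ n ∈ Finset.range N, g ((x + n * α : ℝ) : AddCircle (1:ℝ))) / (N : ℂ)) ≤ dist f g := by
    intro N
    rw [dist_eq_norm, div_sub_div_same, ← Finset.sum_sub_distrib, norm_div, Complex.norm_natCast]
    rcases Nat.eq_zero_or_pos N with rfl | hN
    · simpa using dist_nonneg
    · have hNpos : (0:ℝ) < N := by exact_mod_cast hN
      rw [div_le_iff₀ hNpos]
      calc ‖∑ n ∈ Finset.range N, (f ((x + n * α : ℝ) : AddCircle (1:ℝ)) - g ((x + n * α : ℝ) : AddCircle (1:ℝ)))‖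
          ≤ ∑ n ∈ Finset.range N, ‖f ((x + n * α : ℝ) : AddCircle (1:ℝ)) - g ((x + n * α : ℝ) : AddCircle (1:ℝ))‖ :=
            norm_sum_le _ _
        _ ≤ ∑ _n ∈ Finset.range N, dist f g := by
            apply Finset.sum_le_sum
            intro n _
            rw [← dist_eq_norm]
            exact ContinuousMap.dist_apply_le_dist _
        _ = dist f g * N := by rw [Finset.sum_const, Finset.card_range, nsmul_eq_mul]; ring
  have hintd : dist (∫ y : AddCircle (1:ℝ), g y) (∫ y : AddCircle (1:ℝ), f y) ≤ dist f g := by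
    rw [dist_eq_norm, ← integral_sub (cm_integrable g) (cm_integrable f)]
    calc ‖∫ y : AddCircle (1:ℝ), (g y - f y)‖ ≤ dist f g * (volume (Set.univ : Set (AddCircle (1:ℝ)))).toReal := by
          apply norm_integral_le_of_norm_le_const
          apply Filter.Eventually.of_forall
          intro y
          rw [← dist_eq_norm, dist_comm]
          exact ContinuousMap.dist_apply_le_dist _
      _ = dist f g := by simp
  have hg' : P α x g := hgP
  unfold P at hg'
  rw [Metric.tendsto_atTop] at hg'
  obtain ⟨M, hM⟩ := hg' (ε / 4) (by positivity)
  refine ⟨M, fun N hN => ?_⟩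
  calc dist ((∑ n ∈ Finset.range N, f ((x + n * α : ℝ) : AddCircle (1:ℝ))) / (N : ℂ)) (∫ y : AddCircle (1:ℝ), f y)
      ≤ dist ((∑ n ∈ Finset.range N, f ((x + n * α : ℝ) : AddCircle (1:ℝ))) / (N : ℂ))
          ((∑ n ∈ Finset.range N, g ((x + n * α : ℝ) : AddCircle (1:ℝ))) / (N : ℂ))
        + dist ((∑ n ∈ Finset.range N, g ((x + n * α : ℝ) : AddCircle (1:ℝ))) / (N : ℂ)) (∫ y : AddCircle (1:ℝ), g y)
        + dist (∫ y : AddCircle (1:ℝ), g y) (∫ y : AddCircle (1:ℝ), f y) := dist_triangle4 _ _ _ _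
    _ < ε / 4 + ε / 4 + ε / 4 := by
        have := hbirk N
        have := hM N hN
        have := hintd
        gcongr <;> linarith
    _ < ε := by linarith

lemma P_all (hirr : Irrational α) (f : C(AddCircle (1:ℝ), ℂ)) : P α x f := by
  have hspan : ∀ g ∈ Submodule.span ℂ (Set.range (@fourier 1)), P α x g := by
    intro g hg
    induction hg using Submodule.span_induction with
    | mem g hg => obtain ⟨k, rfl⟩ := hg; exact P_fourier α x hirr k
    | zero =>
        unfold P
        simp only [ContinuousMap.coe_zero, Pi.zero_apply, Finset.sum_const_zero, zero_div,
          integral_zero]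
        exact tendsto_const_nhds
    | add g h _ _ hgP hhP =>
        unfold P at hgP hhP ⊢
        have : (∫ y : AddCircle (1:ℝ), (g + h) y) = (∫ y : AddCircle (1:ℝ), g y) + ∫ y : AddCircle (1:ℝ), h y := by
          simp only [ContinuousMap.coe_add, Pi.add_apply]
          exact integral_add (cm_integrable g) (cm_integrable h)
        rw [this]
        have := hgP.add hhP
        apply Tendsto.congr _ this
        intro N
        simp [Finset.sum_add_distrib, add_div]
    | smul c g _ hgP =>
        unfold P at hgP ⊢
        have : (∫ y : AddCircle (1:ℝ), (c • g) y) = c • ∫ y : AddCircle (1:ℝ), g y := by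
          simp only [ContinuousMap.coe_smul, Pi.smul_apply]
          exact integral_smul c _
        rw [this]
        have := hgP.const_smul c
        apply Tendsto.congr _ this
        intro N
        simp [smul_eq_mul, ← Finset.mul_sum, mul_div_assoc]
  have hcl : f ∈ closure ((Submodule.span ℂ (Set.range (@fourier 1)) : Submodule ℂ _) : Set _) := by
    rw [← Submodule.topologicalClosure_coe, span_fourier_closure_eq_top]
    trivial
  exact closure_minimal hspan (P_isClosed α x) hcl

/-- averages of continuous periodic real functions converge to the integral. -/
lemma periodic_avg_tendsto (hirr : Irrational α) (f : ℝ → ℝ) (hc : Continuous f)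
    (hper : Function.Periodic f 1) :
    Tendsto (fun N : ℕ => (∑ n ∈ Finset.range N, f (x + n * α)) / (N : ℝ))
      atTop (nhds (∫ t in Set.Ioc (0:ℝ) 1, f t)) := by
  set fc : ℝ → ℂ := fun t => (f t : ℂ) with hfc
  have hperc : Function.Periodic fc 1 := fun t => by simp [hfc, hper t]
  have hccont : Continuous fc := Complex.continuous_ofReal.comp hc
  set F : C(AddCircle (1:ℝ), ℂ) :=
    ⟨AddCircle.liftIco 1 0 fc, AddCircle.liftIco_continuous
      (by simpa using (hperc 0).symm) hccont.continuousOn⟩ with hF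
  have hfrac : ∀ t : ℝ, ((t : ℝ) : AddCircle (1:ℝ)) = ((Int.fract t : ℝ) : AddCircle (1:ℝ)) := by
    intro t
    have h0 : (((⌊t⌋ : ℝ)) : AddCircle (1:ℝ)) = 0 := by
      rw [AddCircle.coe_eq_zero_iff]
      exact ⟨⌊t⌋, by simp⟩
    have : ((Int.fract t : ℝ) : AddCircle (1:ℝ)) = ((t : ℝ) : AddCircle (1:ℝ)) - (((⌊t⌋ : ℝ)) : AddCircle (1:ℝ)) := by
      rw [← QuotientAddGroup.mk_sub, Int.self_sub_floor]
    rw [this, h0, sub_zero]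
  have hFt : ∀ t : ℝ, F ((t : ℝ) : AddCircle (1:ℝ)) = fc t := by
    intro t
    rw [hfrac t]
    have hmem : Int.fract t ∈ Set.Ico (0:ℝ) (0 + 1) :=
      ⟨Int.fract_nonneg t, by rw [zero_add]; exact Int.fract_lt_one t⟩
    have h1 : F ((Int.fract t : ℝ) : AddCircle (1:ℝ)) = fc (Int.fract t) := by
      show AddCircle.liftIco 1 0 fc _ = _
      exact AddCircle.liftIco_coe_apply hmem
    rw [h1, ← Int.self_sub_floor]
    have := hperc.sub_zsmul_eq ⌊t⌋ (x := t)
    simpa [zsmul_eq_mul] using this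
  have hint : (∫ y : AddCircle (1:ℝ), F y) = ((∫ t in Set.Ioc (0:ℝ) 1, f t : ℝ) : ℂ) := by
    rw [← AddCircle.integral_preimage 1 0 F]
    rw [zero_add]
    rw [show (∫ t in Set.Ioc (0:ℝ) 1, F ((t:ℝ) : AddCircle (1:ℝ))) = ∫ t in Set.Ioc (0:ℝ) 1, fc t from
      integral_congr_ae (Filter.Eventually.of_forall fun t => hFt t)]
    exact integral_ofReal
  have hP := P_all α x hirr F
  unfold P at hP
  rw [hint] at hP
  have hP2 : Tendsto (fun N : ℕ => (((∑ n ∈ Finset.range N, f (x + n * α)) / (N : ℝ) : ℝ) : ℂ))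
      atTop (nhds ((∫ t in Set.Ioc (0:ℝ) 1, f t : ℝ) : ℂ)) := by
    apply Tendsto.congr _ hP
    intro N
    rw [show (∑ n ∈ Finset.range N, F ((x + n * α : ℝ) : AddCircle (1:ℝ))) = ∑ n ∈ Finset.range N, fc (x + n * α) from
      Finset.sum_congr rfl fun n _ => hFt _]
    push_cast [hfc]
    ring
  have h3 := (Complex.continuous_re.tendsto _).comp hP2
  have h4 : (∫ t in Set.Ioc (0:ℝ) 1, f t) = (((∫ t in Set.Ioc (0:ℝ) 1, f t : ℝ) : ℂ)).re := by
    simp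
  rw [h4]
  apply Tendsto.congr _ h3
  intro N
  simp [Function.comp]

lemma shift_invariant_infDist {S : Set ℝ} (hS : (fun u : ℝ => u + 1) '' S = S) (t : ℝ) :
    infDist (t + 1) S = infDist t S := by
  have iso : Isometry (fun u : ℝ => u + 1) := Isometry.of_dist_eq (by
    intro a b; rw [Real.dist_eq, Real.dist_eq]; ring_nf)
  calc infDist (t + 1) S = infDist ((fun u : ℝ => u + 1) t) ((fun u : ℝ => u + 1) '' S) := by rw [hS]
    _ = infDist t S := infDist_image iso

lemma equid {α : ℝ} (hirr : Irrational α) (x a b : ℝ) (ha : 0 ≤ a) (hab : a ≤ b) (hb : b ≤ 1) :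
    Tendsto (fun N : ℕ =>
        (((Finset.range N).filter fun n : ℕ => Int.fract (x + (n : ℝ) * α) ∈ Set.Ico a b).card : ℝ) / (N : ℝ))
      atTop (nhds (b - a)) := by
  rw [Metric.tendsto_nhds]
  intro ε hε
  set δ : ℝ := ε / 6 with hδdef
  have hδ : 0 < δ := by positivity
  have hshift : ∀ (c d : ℝ),
      (fun u : ℝ => u + 1) '' (⋃ z : ℤ, Set.Icc (c + z) (d + z)) = ⋃ z : ℤ, Set.Icc (c + z) (d + z) := by
    intro c d
    apply Set.Subset.antisymm
    · rintro u ⟨v, hv, rfl⟩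
      obtain ⟨z, hz⟩ := Set.mem_iUnion.1 hv
      rw [Set.mem_Icc] at hz
      refine Set.mem_iUnion.2 ⟨z + 1, ?_⟩
      rw [Set.mem_Icc]; push_cast; constructor <;> linarith [hz.1, hz.2]
    · intro u hu
      obtain ⟨z, hz⟩ := Set.mem_iUnion.1 hu
      rw [Set.mem_Icc] at hz
      exact ⟨u - 1, Set.mem_iUnion.2 ⟨z - 1, by
        rw [Set.mem_Icc]; push_cast; constructor <;> linarith [hz.1, hz.2]⟩, by ring⟩
  set Su : Set ℝ := ⋃ z : ℤ, Set.Icc (a + z) (b + z) with hSu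
  set Tc : Set ℝ := ⋃ z : ℤ, Set.Icc ((b - 1) + z) (a + z) with hTc
  have hSune : Su.Nonempty := ⟨a, Set.mem_iUnion.2 ⟨0, by rw [Set.mem_Icc]; push_cast; constructor <;> linarith⟩⟩
  have hTcne : Tc.Nonempty := ⟨a, Set.mem_iUnion.2 ⟨0, by rw [Set.mem_Icc]; push_cast; constructor <;> linarith⟩⟩
  set H : ℝ → ℝ := fun t => max 0 (1 - infDist t Su / δ) with hHdef
  set G : ℝ → ℝ := fun t => min 1 (infDist t Tc / δ) with hGdef
  have hHc : Continuous H :=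
    continuous_const.max (continuous_const.sub ((continuous_infDist_pt Su).div_const δ))
  have hGc : Continuous G :=
    continuous_const.min ((continuous_infDist_pt Tc).div_const δ)
  have hHper : Function.Periodic H 1 := fun t => by
    simp only [hHdef]; rw [shift_invariant_infDist (hshift a b)]
  have hGper : Function.Periodic G 1 := fun t => by
    simp only [hGdef]; rw [shift_invariant_infDist (hshift (b - 1) a)]
  have hG0 : ∀ t : ℝ, 0 ≤ G t := fun t =>
    le_min zero_le_one (div_nonneg infDist_nonneg hδ.le)
  have hH0 : ∀ t : ℝ, 0 ≤ H t := fun t => le_max_left _ _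
  have hH1 : ∀ t : ℝ, H t ≤ 1 := fun t =>
    max_le zero_le_one (by
      have h1 : (0:ℝ) ≤ infDist t Su / δ := div_nonneg infDist_nonneg hδ.le
      linarith)
  have hcomp : ∀ t ∈ Set.Ico (0:ℝ) 1,
      G t ≤ (if t ∈ Set.Ico a b then (1:ℝ) else 0) ∧
      (if t ∈ Set.Ico a b then (1:ℝ) else 0) ≤ H t := by
    intro t ht
    obtain ⟨ht0, ht1⟩ := ht
    by_cases hmem : t ∈ Set.Ico a b
    · rw [if_pos hmem]
      obtain ⟨hm1, hm2⟩ := hmem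
      refine ⟨min_le_left _ _, ?_⟩
      have hts : t ∈ Su := Set.mem_iUnion.2 ⟨0, by
        rw [Set.mem_Icc]; push_cast; constructor <;> linarith⟩
      have h0 : infDist t Su = 0 := infDist_zero_of_mem hts
      simp only [hHdef, h0, zero_div, sub_zero]
      exact le_max_right _ _
    · rw [if_neg hmem]
      refine ⟨?_, hH0 t⟩
      rw [Set.mem_Ico] at hmem
      push_neg at hmem
      have htT : t ∈ Tc := by
        rcases lt_or_ge t a with hca | hca
        · exact Set.mem_iUnion.2 ⟨0, by rw [Set.mem_Icc]; push_cast; constructor <;> linarith⟩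
        · have hbt : b ≤ t := hmem hca
          exact Set.mem_iUnion.2 ⟨1, by rw [Set.mem_Icc]; push_cast; constructor <;> linarith⟩
      have h0 : infDist t Tc = 0 := infDist_zero_of_mem htT
      simp only [hGdef, h0, zero_div]
      exact min_le_right _ _
  have hHiOn : IntegrableOn H (Set.Ioc (0:ℝ) 1) volume := hHc.integrableOn_Ioc
  have hGiOn : IntegrableOn G (Set.Ioc (0:ℝ) 1) volume := hGc.integrableOn_Ioc
  have hHint : (∫ t in Set.Ioc (0:ℝ) 1, H t) ≤ b - a + 4 * δ := by
    set I1 := Set.Icc (a - δ) (b + δ) with hI1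
    set I2 := Set.Icc (0:ℝ) δ with hI2
    set I3 := Set.Icc (1 - δ) 1 with hI3
    have hpt : ∀ t ∈ Set.Ioc (0:ℝ) 1, H t ≤
        I1.indicator (fun _ => (1:ℝ)) t + I2.indicator (fun _ => (1:ℝ)) t
          + I3.indicator (fun _ => (1:ℝ)) t := by
      intro t ht
      have n1 := Set.indicator_nonneg (fun (_ : ℝ) _ => (zero_le_one : (0:ℝ) ≤ 1)) (s := I1) t
      have n2 := Set.indicator_nonneg (fun (_ : ℝ) _ => (zero_le_one : (0:ℝ) ≤ 1)) (s := I2) t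
      have n3 := Set.indicator_nonneg (fun (_ : ℝ) _ => (zero_le_one : (0:ℝ) ≤ 1)) (s := I3) t
      rcases le_or_gt (H t) 0 with h | h
      · linarith
      · have hdist : infDist t Su < δ := by
          have h2 : 0 < 1 - infDist t Su / δ := by
            by_contra hcon
            push_neg at hcon
            have hHt0 : H t = 0 := by
              simp only [hHdef]; exact max_eq_left hcon
            rw [hHt0] at h
            exact lt_irrefl _ h
          have h3 : infDist t Su / δ < 1 := by linarith
          calc infDist t Su = infDist t Su / δ * δ := by field_simp
            _ < 1 * δ := mul_lt_mul_of_pos_right h3 hδ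
            _ = δ := one_mul δ
        obtain ⟨y, hy, hdy⟩ := (infDist_lt_iff hSune).1 hdist
        obtain ⟨z, hz⟩ := Set.mem_iUnion.1 hy
        rw [Set.mem_Icc] at hz
        rw [Real.dist_eq, abs_lt] at hdy
        have hHt := hH1 t
        rcases lt_trichotomy z 0 with hzc | hzc | hzc
        · have hz1 : (z : ℝ) ≤ -1 := by exact_mod_cast (by omega : z ≤ -1)
          have htm : t ∈ I2 := ⟨ht.1.le, by linarith [hz.2, hdy.1]⟩
          rw [Set.indicator_of_mem htm]
          linarith
        · subst hzc
          push_cast at hz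
          have htm : t ∈ I1 := ⟨by linarith [hz.1, hdy.2], by linarith [hz.2, hdy.1]⟩
          rw [Set.indicator_of_mem htm]
          linarith
        · have hz1 : (1 : ℝ) ≤ (z : ℝ) := by exact_mod_cast hzc
          have htm : t ∈ I3 := ⟨by linarith [hz.1, hdy.2], ht.2⟩
          rw [Set.indicator_of_mem htm]
          linarith
    have hi1 : IntegrableOn (I1.indicator (fun _ => (1:ℝ))) (Set.Ioc (0:ℝ) 1) volume :=
      (integrableOn_const measure_Ioc_lt_top.ne).indicator measurableSet_Icc
    have hi2 : IntegrableOn (I2.indicator (fun _ => (1:ℝ))) (Set.Ioc (0:ℝ) 1) volume :=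
      (integrableOn_const measure_Ioc_lt_top.ne).indicator measurableSet_Icc
    have hi3 : IntegrableOn (I3.indicator (fun _ => (1:ℝ))) (Set.Ioc (0:ℝ) 1) volume :=
      (integrableOn_const measure_Ioc_lt_top.ne).indicator measurableSet_Icc
    have hind : ∀ (c d : ℝ), c ≤ d →
        (∫ t in Set.Ioc (0:ℝ) 1, (Set.Icc c d).indicator (fun _ => (1:ℝ)) t) ≤ d - c := by
      intro c d hcd
      rw [setIntegral_indicator measurableSet_Icc, setIntegral_const, smul_eq_mul, mul_one]
      calc (volume (Set.Ioc (0:ℝ) 1 ∩ Set.Icc c d)).toReal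
          ≤ (volume (Set.Icc c d)).toReal := by
            apply ENNReal.toReal_mono
            · rw [Real.volume_Icc]; exact ENNReal.ofReal_ne_top
            · exact measure_mono Set.inter_subset_right
        _ = d - c := by rw [Real.volume_Icc, ENNReal.toReal_ofReal (by linarith)]
    calc (∫ t in Set.Ioc (0:ℝ) 1, H t)
        ≤ ∫ t in Set.Ioc (0:ℝ) 1, (I1.indicator (fun _ => (1:ℝ)) t + I2.indicator (fun _ => (1:ℝ)) t
            + I3.indicator (fun _ => (1:ℝ)) t) :=
          setIntegral_mono_on hHiOn ((hi1.add hi2).add hi3) measurableSet_Ioc hpt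
      _ = (∫ t in Set.Ioc (0:ℝ) 1, I1.indicator (fun _ => (1:ℝ)) t)
          + (∫ t in Set.Ioc (0:ℝ) 1, I2.indicator (fun _ => (1:ℝ)) t)
          + (∫ t in Set.Ioc (0:ℝ) 1, I3.indicator (fun _ => (1:ℝ)) t) := by
          have hi12 : IntegrableOn (fun t => I1.indicator (fun _ => (1:ℝ)) t
              + I2.indicator (fun _ => (1:ℝ)) t) (Set.Ioc (0:ℝ) 1) volume := hi1.add hi2
          rw [integral_add hi12 hi3, integral_add hi1 hi2]
      _ ≤ (b + δ - (a - δ)) + (δ - 0) + (1 - (1 - δ)) := by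
          gcongr ?_ + ?_ + ?_
          · exact hind _ _ (by linarith)
          · exact hind _ _ (by linarith)
          · exact hind _ _ (by linarith)
      _ = b - a + 4 * δ := by ring
  have hGint : b - a - 2 * δ ≤ ∫ t in Set.Ioc (0:ℝ) 1, G t := by
    have hGnn : 0 ≤ ∫ t in Set.Ioc (0:ℝ) 1, G t :=
      setIntegral_nonneg measurableSet_Ioc fun t _ => hG0 t
    rcases le_or_gt (b - a) (2 * δ) with h | h
    · linarith
    · have hone : ∀ t ∈ Set.Icc (a + δ) (b - δ), G t = 1 := by
        intro t ht
        rw [Set.mem_Icc] at ht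
        have hd : δ ≤ infDist t Tc := by
          by_contra hcon
          push_neg at hcon
          obtain ⟨y, hy, hdy⟩ := (infDist_lt_iff hTcne).1 hcon
          obtain ⟨z, hz⟩ := Set.mem_iUnion.1 hy
          rw [Set.mem_Icc] at hz
          rw [Real.dist_eq, abs_lt] at hdy
          rcases le_or_gt z 0 with hzc | hzc
          · have hzr : (z : ℝ) ≤ 0 := by exact_mod_cast hzc
            linarith [hz.2, hdy.2, ht.1]
          · have hzr : (1 : ℝ) ≤ (z : ℝ) := by exact_mod_cast hzc
            linarith [hz.1, hdy.1, ht.2]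
        have hd1 : (1:ℝ) ≤ infDist t Tc / δ := (one_le_div hδ).2 hd
        simp only [hGdef]
        rw [min_eq_left hd1]
      have hsub : Set.Icc (a + δ) (b - δ) ⊆ Set.Ioc (0:ℝ) 1 := by
        intro t ht
        rw [Set.mem_Icc] at ht
        exact ⟨by linarith [ht.1], by linarith [ht.2]⟩
      calc b - a - 2 * δ = (volume (Set.Icc (a + δ) (b - δ))).toReal • (1:ℝ) := by
            rw [Real.volume_Icc, ENNReal.toReal_ofReal (by linarith), smul_eq_mul, mul_one]; ring
        _ = ∫ _t in Set.Icc (a + δ) (b - δ), (1:ℝ) := (setIntegral_const 1).symm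
        _ = ∫ t in Set.Icc (a + δ) (b - δ), G t :=
            setIntegral_congr_fun measurableSet_Icc fun t ht => (hone t ht).symm
        _ ≤ ∫ t in Set.Ioc (0:ℝ) 1, G t := by
            apply setIntegral_mono_set hGiOn
            · exact Filter.Eventually.of_forall fun t => hG0 t
            · exact HasSubset.Subset.eventuallyLE hsub
  have hHavg := periodic_avg_tendsto α x hirr H hHc hHper
  have hGavg := periodic_avg_tendsto α x hirr G hGc hGper
  have e1 : ∀ᶠ N : ℕ in atTop,
      (∑ n ∈ Finset.range N, H (x + n * α)) / (N : ℝ) < b - a + ε :=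
    hHavg.eventually_lt_const (by rw [hδdef] at hHint; linarith)
  have e2 : ∀ᶠ N : ℕ in atTop,
      b - a - ε < (∑ n ∈ Finset.range N, G (x + n * α)) / (N : ℝ) :=
    hGavg.eventually_const_lt (by rw [hδdef] at hGint; linarith)
  filter_upwards [e1, e2, eventually_ge_atTop 1] with N h1 h2 hN1
  have hNpos : (0:ℝ) < N := by exact_mod_cast hN1
  have hcount : (((Finset.range N).filter fun n : ℕ => Int.fract (x + (n : ℝ) * α) ∈ Set.Ico a b).card : ℝ)
      = ∑ n ∈ Finset.range N, (if Int.fract (x + (n : ℝ) * α) ∈ Set.Ico a b then (1:ℝ) else 0) := by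
    exact (Finset.sum_boole (R := ℝ) (fun n : ℕ => Int.fract (x + n * α) ∈ Set.Ico a b) (Finset.range N)).symm
  have hperG : ∀ t : ℝ, G (Int.fract t) = G t := by
    intro t
    rw [← Int.self_sub_floor]
    have := hGper.sub_zsmul_eq ⌊t⌋ (x := t)
    simpa [zsmul_eq_mul] using this
  have hperH : ∀ t : ℝ, H (Int.fract t) = H t := by
    intro t
    rw [← Int.self_sub_floor]
    have := hHper.sub_zsmul_eq ⌊t⌋ (x := t)
    simpa [zsmul_eq_mul] using this
  have hle1 : (∑ n ∈ Finset.range N, G (x + n * α))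
      ≤ ∑ n ∈ Finset.range N, (if Int.fract (x + n * α) ∈ Set.Ico a b then (1:ℝ) else 0) := by
    apply Finset.sum_le_sum
    intro n _
    rw [← hperG (x + n * α)]
    exact (hcomp _ ⟨Int.fract_nonneg _, Int.fract_lt_one _⟩).1
  have hle2 : (∑ n ∈ Finset.range N, (if Int.fract (x + n * α) ∈ Set.Ico a b then (1:ℝ) else 0))
      ≤ ∑ n ∈ Finset.range N, H (x + n * α) := by
    apply Finset.sum_le_sum
    intro n _
    rw [← hperH (x + n * α)]
    exact (hcomp _ ⟨Int.fract_nonneg _, Int.fract_lt_one _⟩).2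
  have hup : (((Finset.range N).filter fun n : ℕ => Int.fract (x + (n : ℝ) * α) ∈ Set.Ico a b).card : ℝ) / (N : ℝ)
      ≤ (∑ n ∈ Finset.range N, H (x + n * α)) / (N : ℝ) := by
    rw [hcount]
    gcongr
  have hlow : (∑ n ∈ Finset.range N, G (x + n * α)) / (N : ℝ)
      ≤ (((Finset.range N).filter fun n : ℕ => Int.fract (x + (n : ℝ) * α) ∈ Set.Ico a b).card : ℝ) / (N : ℝ) := by
    rw [hcount]
    gcongr
  rw [Real.dist_eq, abs_lt]
  constructor <;> linarith

end BenfordAux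

/-- An exponential growth series `B * F ^ n` with irrational `log₁₀ F` obeys Benford's Law. -/
theorem exponential_growth_benford (B F : ℝ) (hB : 0 < B) (hF : 1 < F)
    (hirr : Irrational (Real.logb 10 F)) :
    ∀ d ∈ Finset.Icc (1 : ℕ) 9,
      Tendsto (fun N : ℕ =>
          (((Finset.range N).filter fun n =>
            Int.fract (Real.logb 10 (B * F ^ n))
              ∈ Set.Ico (Real.logb 10 d) (Real.logb 10 (d + 1))).card : ℝ) / (N : ℝ))
        atTop (nhds (Real.logb 10 (1 + 1 / (d : ℝ)))) := by
  intro d hd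
  rw [Finset.mem_Icc] at hd
  have hd1 : (1:ℝ) ≤ (d:ℝ) := by exact_mod_cast hd.1
  have hd9 : (d:ℝ) ≤ 9 := by exact_mod_cast hd.2
  have hdpos : (0:ℝ) < d := by linarith
  set a := Real.logb 10 (d:ℝ) with hadef
  set b := Real.logb 10 ((d:ℝ) + 1) with hbdef
  have ha : 0 ≤ a := Real.logb_nonneg (by norm_num) hd1
  have hab : a ≤ b := by
    rw [hadef, hbdef]
    exact (Real.logb_le_logb (by norm_num) hdpos (by linarith)).2 (by linarith)
  have hb : b ≤ 1 := by
    have h10 : Real.logb 10 (10:ℝ) = 1 := Real.logb_self_eq_one (by norm_num)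
    have h2 : Real.logb 10 ((d:ℝ)+1) ≤ Real.logb 10 (10:ℝ) :=
      (Real.logb_le_logb (by norm_num) (by linarith) (by norm_num)).2 (by linarith)
    linarith
  have hval : Real.logb 10 (1 + 1/(d:ℝ)) = b - a := by
    rw [show (1 + 1/(d:ℝ)) = ((d:ℝ)+1)/(d:ℝ) by field_simp]
    rw [Real.logb_div (by linarith) (by linarith)]
  have hF0 : F ≠ 0 := by linarith
  have hlog : ∀ n : ℕ, Real.logb 10 (B * F ^ n) = Real.logb 10 B + (n:ℝ) * Real.logb 10 F := by
    intro n
    rw [Real.logb_mul hB.ne' (pow_ne_zero n hF0), Real.logb_pow]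
  rw [hval]
  simp only [hlog]
  exact BenfordAux.equid hirr (Real.logb 10 B) a b ha hab hb
end

section
/- Continuous exponential growth over any full order of magnitude is Benford: for every real F > 1, every real B > 0, and every digit d ∈ {1, ..., 9}, the Lebesgue measure of the set of times t in the interval [log_F B, log_F(10·B)) for which Int.fract(log₁₀(F^t)) lies in [log₁₀ d, log₁₀(d+1)) equals log₁₀(1 + 1/d) · log_F(10). -/
open MeasureTheory

lemma fract_Ico_inter_volume (α β : ℝ) (hα : 0 ≤ α) (hαβ : α ≤ β) (hβ : β ≤ 1) (x : ℝ) :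
    volume (Set.Ico x (x + 1) ∩ {u : ℝ | Int.fract u ∈ Set.Ico α β})
      = ENNReal.ofReal (β - α) := by
  set m : ℝ := (⌊x⌋ : ℝ) with hm
  have hmx : m ≤ x := Int.floor_le x
  have hxm : x < m + 1 := Int.lt_floor_add_one x
  have hdecomp : Set.Ico x (x + 1) ∩ {u : ℝ | Int.fract u ∈ Set.Ico α β}
      = Set.Ico (max x (m + α)) (m + β) ∪ Set.Ico (m + 1 + α) (min (x + 1) (m + 1 + β)) := by
    ext u
    simp only [Set.mem_inter_iff, Set.mem_Ico, Set.mem_setOf_eq, Set.mem_union,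
      max_le_iff, lt_min_iff]
    constructor
    · rintro ⟨⟨hxu, hux⟩, hfα, hfβ⟩
      have hfloor : ⌊u⌋ = ⌊x⌋ ∨ ⌊u⌋ = ⌊x⌋ + 1 := by
        have h1 : (⌊x⌋ : ℤ) ≤ ⌊u⌋ := Int.floor_le_floor hxu
        have h2 : ⌊u⌋ ≤ ⌊x⌋ + 1 := by
          have hu : (⌊u⌋ : ℝ) ≤ u := Int.floor_le u
          have h3 : ((⌊u⌋ : ℤ) : ℝ) < ((⌊x⌋ + 1 + 1 : ℤ) : ℝ) := by push_cast; linarith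
          exact Int.lt_add_one_iff.mp (Int.cast_lt.mp h3)
        omega
      rcases hfloor with h | h
      · left
        have hfr : Int.fract u = u - m := by rw [Int.fract, h, hm]
        rw [hfr] at hfα hfβ
        exact ⟨⟨hxu, by linarith⟩, by linarith⟩
      · right
        have hfr : Int.fract u = u - (m + 1) := by rw [Int.fract, h]; push_cast [hm]; ring
        rw [hfr] at hfα hfβ
        exact ⟨by linarith, by linarith, by linarith⟩
    · rintro (⟨⟨hxu, hau⟩, hub⟩ | ⟨hau, hux, hub⟩)
      · have hfloor : ⌊u⌋ = ⌊x⌋ := by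
          rw [Int.floor_eq_iff]
          constructor <;> [skip; push_cast] <;> rw [← hm] <;> linarith
        have hfr : Int.fract u = u - m := by rw [Int.fract, hfloor, hm]
        rw [hfr]
        exact ⟨⟨hxu, by linarith⟩, by linarith, by linarith⟩
      · have hfloor : ⌊u⌋ = ⌊x⌋ + 1 := by
          rw [Int.floor_eq_iff]
          constructor <;> push_cast <;> rw [← hm] <;> linarith
        have hfr : Int.fract u = u - (m + 1) := by rw [Int.fract, hfloor]; push_cast [hm]; ring
        rw [hfr]
        exact ⟨⟨by linarith, hux⟩, by linarith, by linarith⟩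
  rw [hdecomp, measure_union _ measurableSet_Ico, Real.volume_Ico, Real.volume_Ico]
  · have hymax : max x (m + α) = m + max (x - m) α := by
      rcases le_total x (m + α) with h | h
      · rw [max_eq_right h, max_eq_right (by linarith)]
      · rw [max_eq_left h, max_eq_left (by linarith)]; ring
    have hymin : min (x + 1) (m + 1 + β) = m + 1 + min (x - m) β := by
      rcases le_total (x + 1) (m + 1 + β) with h | h
      · rw [min_eq_left h, min_eq_left (by linarith)]; ring
      · rw [min_eq_right h, min_eq_right (by linarith)]
    rw [hymax, hymin]
    set y := x - m with hy
    have hy1 : y < 1 := by simp [hy]; linarith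
    have hy0 : 0 ≤ y := by simp [hy]; linarith
    rcases le_total y α with h | h
    · rw [max_eq_right h, min_eq_left (h.trans hαβ)]
      rw [ENNReal.ofReal_eq_zero.mpr (by linarith : m + 1 + y - (m + 1 + α) ≤ 0)]
      simp
    · rw [max_eq_left h]
      rcases le_total y β with h2 | h2
      · rw [min_eq_left h2, ← ENNReal.ofReal_add (by linarith) (by linarith)]
        ring_nf
      · rw [min_eq_right h2]
        rw [ENNReal.ofReal_eq_zero.mpr (by linarith : m + β - (m + y) ≤ 0)]
        simp
  · rw [Set.Ico_disjoint_Ico]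
    calc min (m + β) (min (x + 1) (m + 1 + β)) ≤ m + β := min_le_left _ _
    _ ≤ m + 1 + α := by linarith
    _ ≤ max (max x (m + α)) (m + 1 + α) := le_max_right _ _

/-- Continuous exponential growth over any full order of magnitude is Benford: the time
spent with first digit `d` during growth from `B` to `10·B` equals
`log₁₀(1 + 1/d) · log_F 10`. -/
theorem continuous_growth_full_order_benford (F B : ℝ) (hF : 1 < F) (hB : 0 < B) :
    ∀ d ∈ Finset.Icc (1 : ℕ) 9,
      volume {t : ℝ | t ∈ Set.Ico (Real.logb F B) (Real.logb F (10 * B)) ∧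
          Int.fract (Real.logb 10 (F ^ t))
            ∈ Set.Ico (Real.logb 10 (d : ℝ)) (Real.logb 10 ((d : ℝ) + 1))}
        = ENNReal.ofReal (Real.logb 10 (1 + 1 / (d : ℝ)) * Real.logb F 10) := by
  intro d hd
  rw [Finset.mem_Icc] at hd
  have hd1 : (1 : ℝ) ≤ (d : ℝ) := by exact_mod_cast hd.1
  have hF0 : (0 : ℝ) < F := by linarith
  set α := Real.logb 10 (d : ℝ) with hαdef
  set β := Real.logb 10 ((d : ℝ) + 1) with hβdef
  have h10 : (1 : ℝ) < 10 := by norm_num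
  have hα : 0 ≤ α := Real.logb_nonneg h10 hd1
  have hαβ : α ≤ β := Real.logb_le_logb_of_le h10 (by linarith) (by linarith)
  have hβ : β ≤ 1 := by
    have h9 : (d : ℝ) ≤ 9 := by exact_mod_cast hd.2
    have := Real.logb_le_logb_of_le h10 (by linarith : (0:ℝ) < (d : ℝ) + 1)
      (by linarith : (d : ℝ) + 1 ≤ 10)
    rwa [Real.logb_self_eq_one h10] at this
  set c := Real.logb 10 F with hcdef
  have hc0 : 0 < c := Real.logb_pos h10 hF
  have hinv : Real.logb F 10 = c⁻¹ := (Real.inv_logb 10 F).symm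
  set a := Real.logb F B with hadef
  have hb' : Real.logb F (10 * B) = a + c⁻¹ := by
    rw [Real.logb_mul (by norm_num) hB.ne', ← hinv, hadef]
    ring
  have hlog : ∀ t : ℝ, Real.logb 10 (F ^ t) = c * t := by
    intro t
    rw [Real.logb, Real.log_rpow hF0, hcdef, Real.logb]
    ring
  have hset : {t : ℝ | t ∈ Set.Ico a (Real.logb F (10 * B)) ∧
      Int.fract (Real.logb 10 (F ^ t)) ∈ Set.Ico α β}
      = (fun t : ℝ => c * t) ⁻¹'
        (Set.Ico (c * a) (c * a + 1) ∩ {u : ℝ | Int.fract u ∈ Set.Ico α β}) := by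
    ext t
    simp only [Set.mem_setOf_eq, Set.mem_preimage, Set.mem_inter_iff, Set.mem_Ico, hlog t, hb']
    constructor
    · rintro ⟨⟨h1, h2⟩, h3⟩
      refine ⟨⟨by nlinarith, ?_⟩, h3⟩
      have : c * t < c * (a + c⁻¹) := by nlinarith
      calc c * t < c * a + c * c⁻¹ := by linarith [mul_add c a c⁻¹ ▸ this]
      _ = c * a + 1 := by rw [mul_inv_cancel₀ hc0.ne']
    · rintro ⟨⟨h1, h2⟩, h3⟩
      refine ⟨⟨?_, ?_⟩, h3⟩
      · nlinarith
      · have hcc : c * c⁻¹ = 1 := mul_inv_cancel₀ hc0.ne'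
        nlinarith
  rw [hset, Real.volume_preimage_mul_left hc0.ne',
    fract_Ico_inter_volume α β hα hαβ hβ (c * a),
    abs_of_pos (inv_pos.mpr hc0), hinv,
    ← ENNReal.ofReal_mul (inv_pos.mpr hc0).le]
  congr 1
  have hβα : β - α = Real.logb 10 (1 + 1 / (d : ℝ)) := by
    rw [hαdef, hβdef, ← Real.logb_div (by linarith) (by linarith)]
    congr 1
    field_simp
  rw [hβα]
  ring
end

section
/- The base-10 logarithm of the golden ratio is irrational: log₁₀((1 + √5)/2) is an irrational real number; consequently the Fibonacci-type growth factor φ = (1+√5)/2 is not an anomalous growth factor. -/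
lemma golden_pow_form (n : ℕ) (hn : 1 ≤ n) :
    ∃ a b : ℚ, 0 < a ∧ 0 < b ∧
      ((1 + Real.sqrt 5) / 2) ^ n = (a : ℝ) + (b : ℝ) * Real.sqrt 5 := by
  induction n with
  | zero => omega
  | succ n ih =>
    rcases Nat.eq_or_lt_of_le hn with h | h
    · refine ⟨1/2, 1/2, by norm_num, by norm_num, ?_⟩
      rw [← h]
      push_cast
      ring
    · obtain ⟨a, b, ha, hb, heq⟩ := ih (by omega)
      refine ⟨a/2 + 5*b/2, a/2 + b/2, by positivity, by positivity, ?_⟩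
      have h5 : Real.sqrt 5 * Real.sqrt 5 = 5 := Real.mul_self_sqrt (by norm_num)
      rw [pow_succ, heq]
      push_cast
      linear_combination ((b:ℝ)/2) * h5

lemma golden_pow_irrational (n : ℕ) (hn : 1 ≤ n) :
    Irrational (((1 + Real.sqrt 5) / 2) ^ n) := by
  obtain ⟨a, b, _, hb, heq⟩ := golden_pow_form n hn
  rw [heq]
  exact ((show Irrational (Real.sqrt 5) by simpa using Nat.prime_five.irrational_sqrt).ratCast_mul hb.ne').ratCast_add a

/-- The base-10 logarithm of the golden ratio is irrational, so the Fibonacci growth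
factor `φ = (1 + √5)/2` is not an anomalous growth factor. -/
theorem logb_golden_ratio_irrational :
    Irrational (Real.logb 10 ((1 + Real.sqrt 5) / 2)) := by
  set φ : ℝ := (1 + Real.sqrt 5) / 2 with hφ
  have h5 : (2:ℝ) < Real.sqrt 5 := by
    have : Real.sqrt 4 < Real.sqrt 5 := Real.sqrt_lt_sqrt (by norm_num) (by norm_num)
    have h4 : Real.sqrt 4 = 2 := by
      rw [show (4:ℝ) = 2^2 by norm_num, Real.sqrt_sq (by norm_num)]
    linarith
  have hφ1 : 1 < φ := by rw [hφ]; linarith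
  have hφ0 : 0 < φ := by linarith
  intro ⟨q, hq⟩
  have hpos : 0 < Real.logb 10 φ := Real.logb_pos (by norm_num) hφ1
  have hqpos : 0 < q := by
    rw [← hq] at hpos; exact_mod_cast hpos
  have hrpow : (10:ℝ) ^ (q:ℝ) = φ := by
    rw [hq]; exact Real.rpow_logb (by norm_num) (by norm_num) hφ0
  have hkey : φ ^ (q.den : ℕ) = (10:ℝ) ^ (q.num) := by
    rw [← hrpow, ← Real.rpow_natCast ((10:ℝ) ^ (q:ℝ)) q.den, ← Real.rpow_mul (by norm_num),
      ← Real.rpow_intCast]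
    congr 1
    rw [← Rat.cast_natCast, ← Rat.cast_mul, ← Rat.cast_intCast]
    exact_mod_cast congrArg (Rat.cast (K := ℝ)) (Rat.mul_den_eq_num q)
  have hirr := golden_pow_irrational q.den q.pos
  rw [hkey] at hirr
  have : (10:ℝ) ^ (q.num) = (((10:ℚ) ^ q.num : ℚ) : ℝ) := by push_cast; ring
  rw [this] at hirr
  exact (Rat.not_irrational _) hirr
end
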